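/- Fix n ≥ 2, N ≥ 1, and 1 ≤ θ ≤ n−1. Let E be the set of n × N Boolean measurement matrices all of whose columns have Hamming weight θ−1, θ, or θ+1. Then E is a multidimensional fooling set for the block delta function Π_{{θ}}^N: for any two distinct matrices M₁, M₂ ∈ E with Π_{{θ}}^N(M₁) = Π_{{θ}}^N(M₂), there exists a row index i* such that replacing row i* of one matrix by row i* of the other yields a matrix M* with Π_{{θ}}^N(M*) ≠ Π_{{θ}}^N(M₁). -/

import Mathlib

/-- The Hamming weight of the `j`-th column of an `n × N` Boolean measurement matrix. -/
def colWeight {n N : ℕ} (M : Fin n → Fin N → Bool) (j : Fin N) : ℕ :=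
  (Finset.univ.filter fun i => M i j = true).card

/-- The block delta function `Π_{{θ}}^N`: its `j`-th coordinate is `1` iff the `j`-th
column of `M` has exactly `θ` ones. -/
def blockDelta {n N : ℕ} (θ : ℕ) (M : Fin n → Fin N → Bool) : Fin N → Bool :=
  fun j => decide (colWeight M j = θ)

lemma colWeight_update_add {n N : ℕ} (M : Fin n → Fin N → Bool) (i : Fin n)
    (r : Fin N → Bool) (j : Fin N) (h1 : M i j = false) (h2 : r j = true) :
    colWeight (Function.update M i r) j = colWeight M j + 1 := by
  unfold colWeight
  have hset : (Finset.univ.filter fun i' => Function.update M i r i' j = true)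
      = insert i (Finset.univ.filter fun i' => M i' j = true) := by
    ext i'
    simp only [Finset.mem_filter, Finset.mem_insert, Finset.mem_univ, true_and,
      Function.update_apply]
    rcases eq_or_ne i' i with rfl | h
    · simp [h2]
    · simp [h]
  rw [hset, Finset.card_insert_of_notMem (by simp [h1])]

lemma colWeight_update_sub {n N : ℕ} (M : Fin n → Fin N → Bool) (i : Fin n)
    (r : Fin N → Bool) (j : Fin N) (h1 : M i j = true) (h2 : r j = false) :
    colWeight (Function.update M i r) j + 1 = colWeight M j := by
  unfold colWeight
  have hset : (Finset.univ.filter fun i' => Function.update M i r i' j = true)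
      = (Finset.univ.filter fun i' => M i' j = true).erase i := by
    ext i'
    simp only [Finset.mem_filter, Finset.mem_erase, Finset.mem_univ, true_and,
      Function.update_apply]
    rcases eq_or_ne i' i with rfl | h
    · simp [h2]
    · simp [h]
  rw [hset, Finset.card_erase_add_one (by simp [h1])]

lemma exists_mem_not_mem {α : Type*} {S T : Finset α} (hne : S ≠ T)
    (hcard : S.card ≤ T.card) : ∃ x, x ∈ T ∧ x ∉ S := by
  by_contra h
  push_neg at h
  exact hne (Finset.eq_of_subset_of_card_le (fun x hx => h x hx) hcard).symm

/-- The set of measurement matrices all of whose columns have Hamming weight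
`θ−1`, `θ` or `θ+1` is a multidimensional fooling set for the block delta function
`Π_{{θ}}^N`. -/
theorem delta_fooling_set (n N θ : ℕ)
    (hn : 2 ≤ n) (hN : 1 ≤ N) (hθ1 : 1 ≤ θ) (hθn : θ ≤ n - 1)
    (M₁ M₂ : Fin n → Fin N → Bool)
    (h₁ : ∀ j, colWeight M₁ j = θ - 1 ∨ colWeight M₁ j = θ ∨ colWeight M₁ j = θ + 1)
    (h₂ : ∀ j, colWeight M₂ j = θ - 1 ∨ colWeight M₂ j = θ ∨ colWeight M₂ j = θ + 1)
    (hne : M₁ ≠ M₂)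
    (heq : blockDelta θ M₁ = blockDelta θ M₂) :
    ∃ i : Fin n,
      blockDelta θ (Function.update M₁ i (M₂ i)) ≠ blockDelta θ M₁ ∨
      blockDelta θ (Function.update M₂ i (M₁ i)) ≠ blockDelta θ M₁ := by
  -- find a differing entry
  have hex : ∃ i j, M₁ i j ≠ M₂ i j := by
    by_contra h
    push_neg at h
    exact hne (funext fun i => funext fun j => h i j)
  obtain ⟨i₀, j, hij⟩ := hex
  have heqj : colWeight M₁ j = θ ↔ colWeight M₂ j = θ := by
    have := congrFun heq j
    simpa [blockDelta, decide_eq_decide] using this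
  have hθlt : θ - 1 < θ := Nat.sub_lt hθ1 one_pos
  -- helper: conclude from a flip at column j for M₁
  have conclude : ∀ i : Fin n,
      ¬ (colWeight (Function.update M₁ i (M₂ i)) j = θ ↔ colWeight M₁ j = θ) →
      blockDelta θ (Function.update M₁ i (M₂ i)) ≠ blockDelta θ M₁ := by
    intro i hflip hcontra
    exact hflip (by simpa [blockDelta, decide_eq_decide] using congrFun hcontra j)
  -- the filter sets at column j differ
  have hSne : (Finset.univ.filter fun i => M₁ i j = true)
      ≠ (Finset.univ.filter fun i => M₂ i j = true) := by
    intro h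
    apply hij
    have h0 := Finset.ext_iff.mp h i₀
    simp only [Finset.mem_filter, Finset.mem_univ, true_and] at h0
    cases hb1 : M₁ i₀ j <;> cases hb2 : M₂ i₀ j <;> simp_all
  rcases h₁ j with hw1 | hw1 | hw1
  · -- colWeight M₁ j = θ - 1 < θ; find i with M₁ i j = false, M₂ i j = true
    have hne1 : colWeight M₁ j ≠ θ := by omega
    have hle : (Finset.univ.filter fun i => M₁ i j = true).card
        ≤ (Finset.univ.filter fun i => M₂ i j = true).card := by
      have hw2 := h₂ j
      have hne2 : colWeight M₂ j ≠ θ := fun h => hne1 (heqj.mpr h)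
      show colWeight M₁ j ≤ colWeight M₂ j
      omega
    obtain ⟨i, hiT, hiS⟩ := exists_mem_not_mem hSne hle
    simp only [Finset.mem_filter, Finset.mem_univ, true_and] at hiT hiS
    have hiS' : M₁ i j = false := by simpa using hiS
    refine ⟨i, Or.inl (conclude i ?_)⟩
    rw [colWeight_update_add M₁ i (M₂ i) j hiS' hiT]
    omega
  · -- colWeight M₁ j = θ : flip at i₀
    refine ⟨i₀, Or.inl (conclude i₀ ?_)⟩
    cases hb1 : M₁ i₀ j
    · have hb2 : M₂ i₀ j = true := by
        cases hb2 : M₂ i₀ j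
        · exact absurd (hb1.trans hb2.symm) hij
        · rfl
      rw [colWeight_update_add M₁ i₀ (M₂ i₀) j hb1 hb2]
      omega
    · have hb2 : M₂ i₀ j = false := by
        cases hb2 : M₂ i₀ j
        · rfl
        · exact absurd (hb1.trans hb2.symm) hij
      have := colWeight_update_sub M₁ i₀ (M₂ i₀) j hb1 hb2
      omega
  · -- colWeight M₁ j = θ + 1; find i with M₁ i j = true, M₂ i j = false
    have hne1 : colWeight M₁ j ≠ θ := by omega
    have hle : (Finset.univ.filter fun i => M₂ i j = true).card
        ≤ (Finset.univ.filter fun i => M₁ i j = true).card := by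
      have hw2 := h₂ j
      have hne2 : colWeight M₂ j ≠ θ := fun h => hne1 (heqj.mpr h)
      show colWeight M₂ j ≤ colWeight M₁ j
      omega
    obtain ⟨i, hiT, hiS⟩ := exists_mem_not_mem hSne.symm hle
    simp only [Finset.mem_filter, Finset.mem_univ, true_and] at hiT hiS
    have hiS' : M₂ i j = false := by simpa using hiS
    refine ⟨i, Or.inl (conclude i ?_)⟩
    have := colWeight_update_sub M₁ i (M₂ i) j hiT hiS'
    omega
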